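/- Let n ≥ 2 and let σ_1, …, σ_{n−1} be elements of a group G satisfying the braid relations. Define the 'staircase' element c = (σ_{n−1}σ_{n−2}⋯σ_2)·(σ_{n−1}σ_{n−2}⋯σ_3)⋯(σ_{n−1}σ_{n−2})·(σ_{n−1}), i.e. c is the product over k = 2, 3, …, n−1 (in this order) of the descending blocks σ_{n−1}σ_{n−2}⋯σ_k. Then c·(σ_1σ_2⋯σ_{n−1})·c^{−1} = σ_{n−1}σ_{n−2}⋯σ_1. -/

import Mathlib

/-- The ascending product `σ_a σ_{a+1} ⋯ σ_b` (written left to right). -/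
def ascProd {G : Type*} [Group G] (σ : ℕ → G) (a b : ℕ) : G :=
  ((List.range' a (b + 1 - a)).map σ).prod

/-- The descending product `σ_a σ_{a-1} ⋯ σ_b` (written left to right). -/
def descProd {G : Type*} [Group G] (σ : ℕ → G) (a b : ℕ) : G :=
  (((List.range' b (a + 1 - b)).map σ).reverse).prod

lemma ascProd_cons {G : Type*} [Group G] (σ : ℕ → G) (a b : ℕ) (h : a ≤ b) :
    ascProd σ a b = σ a * ascProd σ (a + 1) b := by
  unfold ascProd
  have h1 : b + 1 - a = (b + 1 - (a + 1)) + 1 := by omega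
  rw [h1, List.range'_succ]
  simp

lemma descProd_step {G : Type*} [Group G] (σ : ℕ → G) (a b : ℕ) (h : b ≤ a) :
    descProd σ a b = descProd σ a (b + 1) * σ b := by
  unfold descProd
  have h1 : a + 1 - b = (a + 1 - (b + 1)) + 1 := by omega
  rw [h1, List.range'_succ]
  simp

lemma commute_descProd {G : Type*} [Group G] {n : ℕ} (σ : ℕ → G)
    (hcomm : ∀ i j, 1 ≤ i → 1 ≤ j → i + 1 ≤ n → j + 1 ≤ n → i + 2 ≤ j →
      σ i * σ j = σ j * σ i)
    (i a b : ℕ) (hi1 : 1 ≤ i) (hin : i + 1 ≤ n) (ha : a + 1 ≤ n) (hb : i + 2 ≤ b) :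
    Commute (σ i) (descProd σ a b) := by
  unfold descProd
  apply Commute.list_prod_right
  intro x hx
  rw [List.mem_reverse, List.mem_map] at hx
  obtain ⟨k, hk, rfl⟩ := hx
  rw [List.mem_range'_1] at hk
  exact hcomm i k hi1 (by omega) hin (by omega) (by omega)

theorem staircase_conjugates_ascending_to_descending
    {G : Type*} [Group G] (n : ℕ) (hn : 2 ≤ n) (σ : ℕ → G)
    (hbraid : ∀ i, 1 ≤ i → i + 2 ≤ n →
      σ i * σ (i + 1) * σ i = σ (i + 1) * σ i * σ (i + 1))
    (hcomm : ∀ i j, 1 ≤ i → 1 ≤ j → i + 1 ≤ n → j + 1 ≤ n → i + 2 ≤ j →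
      σ i * σ j = σ j * σ i)
    (c : G)
    (hc : c = ((List.range' 2 (n - 2)).map (fun k => descProd σ (n - 1) k)).prod) :
    c * ascProd σ 1 (n - 1) * c⁻¹ = descProd σ (n - 1) 1 := by
  have key : ∀ j, j ≤ n - 2 →
      (((List.range' (n - j) j).map (fun k => descProd σ (n - 1) k)).prod) *
        ascProd σ (n - 1 - j) (n - 1)
      = descProd σ (n - 1) (n - 1 - j) *
        (((List.range' (n - j) j).map (fun k => descProd σ (n - 1) k)).prod) := by
    intro j
    induction j with
    | zero =>
        intro _
        simp only [List.range'_zero, List.map_nil, List.prod_nil, one_mul, mul_one,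
          Nat.sub_zero]
        unfold ascProd descProd
        have h1 : n - 1 + 1 - (n - 1) = 1 := by omega
        rw [h1]
        simp
    | succ j ih =>
        intro hj1
        have IH := ih (by omega)
        set m := n - 1 - j with hm
        have hm2 : 2 ≤ m := by omega
        have hr : List.range' (n - (j + 1)) (j + 1) = m :: List.range' (n - j) j := by
          rw [List.range'_succ]
          have h1 : n - (j + 1) = m := by omega
          have h2 : m + 1 = n - j := by omega
          rw [h1, h2]
        rw [hr]
        set Q := ((List.range' (n - j) j).map (fun k => descProd σ (n - 1) k)).prod with hQ
        have hn1j : n - 1 - (j + 1) = m - 1 := by omega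
        rw [hn1j]
        simp only [List.map_cons, List.prod_cons]
        have hasc : ascProd σ (m - 1) (n - 1) = σ (m - 1) * ascProd σ m (n - 1) := by
          rw [ascProd_cons σ (m - 1) (n - 1) (by omega)]
          congr 2
          omega
        have hcommQ : Commute (σ (m - 1)) Q := by
          apply Commute.list_prod_right
          intro x hx
          rw [List.mem_map] at hx
          obtain ⟨k, hk, rfl⟩ := hx
          rw [List.mem_range'_1] at hk
          exact commute_descProd σ hcomm (m - 1) (n - 1) k (by omega) (by omega)
            (by omega) (by omega)
        have hdesc : descProd σ (n - 1) (m - 1) = descProd σ (n - 1) m * σ (m - 1) := by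
          rw [descProd_step σ (n - 1) (m - 1) (by omega)]
          congr 2
          omega
        have hIH' : Q * ascProd σ m (n - 1) = descProd σ (n - 1) m * Q := by
          rw [hm] at IH ⊢; exact IH
        calc descProd σ (n - 1) m * Q * ascProd σ (m - 1) (n - 1)
            = descProd σ (n - 1) m * Q * (σ (m - 1) * ascProd σ m (n - 1)) := by rw [hasc]
          _ = descProd σ (n - 1) m * (Q * σ (m - 1)) * ascProd σ m (n - 1) := by
              group
          _ = descProd σ (n - 1) m * (σ (m - 1) * Q) * ascProd σ m (n - 1) := by
              rw [hcommQ.eq]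
          _ = descProd σ (n - 1) m * σ (m - 1) * (Q * ascProd σ m (n - 1)) := by
              group
          _ = descProd σ (n - 1) m * σ (m - 1) * (descProd σ (n - 1) m * Q) := by
              rw [hIH']
          _ = descProd σ (n - 1) (m - 1) * (descProd σ (n - 1) m * Q) := by
              rw [hdesc]
  have h := key (n - 2) (le_refl _)
  have h1 : n - (n - 2) = 2 := by omega
  have h2 : n - 1 - (n - 2) = 1 := by omega
  rw [h1, h2] at h
  rw [hc] at *
  rw [mul_inv_eq_iff_eq_mul]
  exact h
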